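/- arXiv:1309.0787 — 7 statements merged into one kernel-verified Lean document; each statement's English description precedes it below -/
import Mathlib

section
/- Let k ≥ 1 be an integer and α ∈ ℝ^k with α_i > 0 for all i, and set α_0 := Σ_{i=1}^k α_i. Then the Dirichlet weight w_α is integrable on T_k and ∫_{T_k} w_α(x) dx = (∏_{i=1}^k Γ(α_i)) / Γ(α_0), where Γ is the Gamma function. -/
open MeasureTheory

noncomputable section

/-- The simplex `T_k ⊆ ℝ^{k-1}`: nonnegative coordinates summing to at most 1. -/
def Tset (k : ℕ) : Set (Fin (k - 1) → ℝ) :=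
  {x | (∀ i, 0 ≤ x i) ∧ ∑ i, x i ≤ 1}

/-- The completed vector `x̄ ∈ ℝ^k`: first `k-1` coordinates are those of `x`,
the last coordinate is `1 - Σ x_i`. -/
def bar (k : ℕ) (x : Fin (k - 1) → ℝ) : Fin k → ℝ :=
  fun i => if h : (i : ℕ) < k - 1 then x ⟨i, h⟩ else 1 - ∑ j, x j

/-- The Dirichlet weight `w_α(x) = ∏ x̄_i^{α_i - 1}`. -/
def dirW (k : ℕ) (α : Fin k → ℝ) (x : Fin (k - 1) → ℝ) : ℝ :=
  ∏ i, bar k x i ^ (α i - 1)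

open Set


lemma ofReal_beta_integrand {a b x : ℝ} (hx0 : 0 ≤ x) (hx1 : x ≤ 1) :
    ((x ^ (a - 1) * (1 - x) ^ (b - 1) : ℝ) : ℂ)
      = (x:ℂ) ^ ((a:ℂ) - 1) * (1 - (x:ℂ)) ^ ((b:ℂ) - 1) := by
  have h1 : (0:ℝ) ≤ 1 - x := by linarith
  rw [Complex.ofReal_mul, Complex.ofReal_cpow hx0, Complex.ofReal_cpow h1]
  push_cast
  ring_nf

lemma realBeta_integrable {a b : ℝ} (ha : 0 < a) (hb : 0 < b) :
    IntegrableOn (fun x : ℝ => x ^ (a - 1) * (1 - x) ^ (b - 1)) (Ioo 0 1) volume := by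
  have hC : IntegrableOn (fun x : ℝ => (x : ℂ) ^ ((a : ℂ) - 1) * (1 - (x : ℂ)) ^ ((b : ℂ) - 1))
      (Ioc 0 1) volume := by
    have := Complex.betaIntegral_convergent (u := a) (v := b) (by simpa using ha) (by simpa using hb)
    exact (intervalIntegrable_iff_integrableOn_Ioc_of_le zero_le_one).mp this
  have hre : IntegrableOn
      (fun x : ℝ => ((x : ℂ) ^ ((a : ℂ) - 1) * (1 - (x : ℂ)) ^ ((b : ℂ) - 1)).re)
      (Ioc 0 1) volume := hC.re
  refine ((hre.congr_fun (fun x hx => ?_) measurableSet_Ioc).mono_set Ioo_subset_Ioc_self)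
  rw [← ofReal_beta_integrand hx.1.le hx.2]
  simp

lemma realBeta_integral {a b : ℝ} (ha : 0 < a) (hb : 0 < b) :
    ∫ x in Ioo (0:ℝ) 1, x ^ (a - 1) * (1 - x) ^ (b - 1) =
      Real.Gamma a * Real.Gamma b / Real.Gamma (a + b) := by
  have hab : Real.Gamma (a + b) ≠ 0 := (Real.Gamma_pos_of_pos (by linarith)).ne'
  have key : Complex.betaIntegral a b =
      ((∫ x in Ioo (0:ℝ) 1, x ^ (a - 1) * (1 - x) ^ (b - 1) : ℝ) : ℂ) := by
    rw [Complex.betaIntegral]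
    rw [show ∫ x in Ioo (0:ℝ) 1, x ^ (a - 1) * (1 - x) ^ (b - 1)
        = ∫ x in (0:ℝ)..1, x ^ (a - 1) * (1 - x) ^ (b - 1) by
      rw [intervalIntegral.integral_of_le zero_le_one, integral_Ioc_eq_integral_Ioo]]
    rw [← intervalIntegral.integral_ofReal]
    refine intervalIntegral.integral_congr fun x hx => ?_
    rw [uIcc_of_le zero_le_one] at hx
    exact (ofReal_beta_integrand hx.1 hx.2).symm
  have h2 := Complex.Gamma_mul_Gamma_eq_betaIntegral (s := a) (t := b)
    (by simpa using ha) (by simpa using hb)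
  rw [key] at h2
  rw [show ((a:ℂ) + b) = ((a + b : ℝ) : ℂ) by push_cast; ring] at h2
  rw [Complex.Gamma_ofReal, Complex.Gamma_ofReal, Complex.Gamma_ofReal] at h2
  rw [← Complex.ofReal_mul, ← Complex.ofReal_mul] at h2
  have := Complex.ofReal_inj.mp h2
  field_simp
  linarith [this]

lemma realBeta_lintegral {a b : ℝ} (ha : 0 < a) (hb : 0 < b) :
    ∫⁻ x in Ioo (0:ℝ) 1, ENNReal.ofReal (x ^ (a - 1) * (1 - x) ^ (b - 1)) =
      ENNReal.ofReal (Real.Gamma a * Real.Gamma b / Real.Gamma (a + b)) := by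
  rw [← ofReal_integral_eq_lintegral_ofReal (realBeta_integrable ha hb) ?_]
  · rw [realBeta_integral ha hb]
  · filter_upwards [ae_restrict_mem measurableSet_Ioo] with x hx
    have h1 : (0:ℝ) < 1 - x := by linarith [hx.2]
    have h0 : (0:ℝ) < x := hx.1
    positivity

lemma bar_pos' {k : ℕ} (x : Fin (k-1) → ℝ) (i : Fin k) (h : (i : ℕ) < k - 1) :
    bar k x i = x ⟨i, h⟩ := dif_pos h

lemma bar_neg' {k : ℕ} (x : Fin (k-1) → ℝ) (i : Fin k) (h : ¬ (i : ℕ) < k - 1) :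
    bar k x i = 1 - ∑ j, x j := dif_neg h

lemma measurableSet_Tset (k : ℕ) : MeasurableSet (Tset k) := by
  have h1 : MeasurableSet {x : Fin (k-1) → ℝ | ∀ i, 0 ≤ x i} := by
    rw [show {x : Fin (k-1) → ℝ | ∀ i, 0 ≤ x i} = ⋂ i, {x | 0 ≤ x i} from by ext; simp]
    exact MeasurableSet.iInter fun i => measurableSet_le measurable_const (measurable_pi_apply i)
  have h2 : MeasurableSet {x : Fin (k-1) → ℝ | ∑ i, x i ≤ 1} :=
    measurableSet_le (Finset.measurable_sum _ fun i _ => measurable_pi_apply i) measurable_const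
  exact h1.inter h2

lemma measurable_bar (k : ℕ) (i : Fin k) : Measurable fun x => bar k x i := by
  unfold bar
  split
  · exact measurable_pi_apply _
  · exact measurable_const.sub (Finset.measurable_sum _ fun j _ => measurable_pi_apply j)

lemma measurable_dirW (k : ℕ) (α : Fin k → ℝ) : Measurable (dirW k α) := by
  unfold dirW
  refine Finset.measurable_prod _ fun i _ => ?_
  have := measurable_bar k i
  fun_prop

lemma bar_nonneg {k : ℕ} {x : Fin (k-1) → ℝ} (hx : x ∈ Tset k) (i : Fin k) :
    0 ≤ bar k x i := by
  unfold bar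
  split
  · exact hx.1 _
  · linarith [hx.2]

lemma dirW_nonneg {k : ℕ} (α : Fin k → ℝ) {x : Fin (k-1) → ℝ} (hx : x ∈ Tset k) :
    0 ≤ dirW k α x :=
  Finset.prod_nonneg fun i _ => Real.rpow_nonneg (bar_nonneg hx i) _

lemma sum_insertNth_zero {n : ℕ} (t : ℝ) (y : Fin n → ℝ) :
    ∑ i, Fin.insertNth (0 : Fin (n+1)) t y i = t + ∑ j, y j := by
  rw [Fin.sum_univ_succ, Fin.insertNth_apply_same]
  congr 1

lemma smul_sum {n : ℕ} (c : ℝ) (z : Fin n → ℝ) : ∑ j, (c • z) j = c * ∑ j, z j := by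
  rw [Finset.mul_sum]; rfl

lemma bar_insertNth {n : ℕ} (t : ℝ) (z : Fin n → ℝ) :
    bar (n+2) (Fin.insertNth (0 : Fin (n+1)) t ((1-t) • z))
      = Fin.cons t (fun j => (1-t) * bar (n+1) z j) := by
  have e1 : n + 2 - 1 = n + 1 := rfl
  have e2 : n + 1 - 1 = n := rfl
  funext i
  refine Fin.cases ?_ (fun i' => ?_) i
  · rw [Fin.cons_zero, bar_pos' _ _ (show ((0 : Fin (n+2)) : ℕ) < n + 2 - 1 from n.succ_pos),
      show (⟨((0 : Fin (n+2)) : ℕ), _⟩ : Fin (n+2-1)) = (0 : Fin (n+1)) from rfl,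
      Fin.insertNth_apply_same]
  · rw [Fin.cons_succ]
    by_cases hi : (i' : ℕ) < n
    · rw [bar_pos' _ _ (show ((i'.succ : Fin (n+2)) : ℕ) < n + 2 - 1 by
        simp only [Fin.val_succ, e1]; omega)]
      rw [show (⟨((i'.succ : Fin (n+2)) : ℕ), _⟩ : Fin (n+2-1))
          = Fin.succ (⟨(i' : ℕ), hi⟩ : Fin n) from rfl]
      rw [← congrFun Fin.succAbove_zero (⟨(i' : ℕ), hi⟩ : Fin n), Fin.insertNth_apply_succAbove]
      rw [bar_pos' z i' (show (i' : ℕ) < n + 1 - 1 from hi)]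
      rfl
    · rw [bar_neg' _ _ (show ¬ ((i'.succ : Fin (n+2)) : ℕ) < n + 2 - 1 by
        simp only [Fin.val_succ, e1]; omega)]
      rw [bar_neg' z i' (show ¬ (i' : ℕ) < n + 1 - 1 from hi)]
      rw [show (∑ j : Fin (n+2-1), Fin.insertNth (0 : Fin (n+1)) t ((1-t) • z) j)
          = ∑ j : Fin (n+1), Fin.insertNth (0 : Fin (n+1)) t ((1-t) • z) j from rfl]
      rw [sum_insertNth_zero, smul_sum]
      rw [show (∑ j : Fin (n+1-1), z j) = ∑ j : Fin n, z j from rfl]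
      ring

lemma mem_Tset_insertNth {n : ℕ} {t : ℝ} (ht : t ∈ Ioo (0:ℝ) 1) (z : Fin n → ℝ) :
    Fin.insertNth (0 : Fin (n+1)) t ((1-t) • z) ∈ Tset (n+2) ↔ z ∈ Tset (n+1) := by
  have hc : (0:ℝ) < 1 - t := by linarith [ht.2]
  have hsum : (∑ i : Fin (n+2-1), Fin.insertNth (0 : Fin (n+1)) t ((1-t) • z) i)
      = t + (1-t) * ∑ j : Fin n, z j := by
    rw [show (∑ i : Fin (n+2-1), Fin.insertNth (0 : Fin (n+1)) t ((1-t) • z) i)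
        = ∑ i : Fin (n+1), Fin.insertNth (0 : Fin (n+1)) t ((1-t) • z) i from rfl,
      sum_insertNth_zero, smul_sum]
  constructor
  · rintro ⟨h1, h2⟩
    refine ⟨fun j => ?_, ?_⟩
    · have := h1 (Fin.succ j)
      rw [show (Fin.succ j : Fin (n+2-1)) = Fin.succAbove 0 j from (congrFun Fin.succAbove_zero j).symm,
        Fin.insertNth_apply_succAbove] at this
      have h3 : 0 ≤ (1-t) * z j := this
      nlinarith
    · rw [hsum] at h2
      have h4 : (∑ j : Fin (n+1-1), z j) = ∑ j : Fin n, z j := rfl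
      rw [h4]
      nlinarith
  · rintro ⟨h1, h2⟩
    have h1' : ∀ j : Fin n, 0 ≤ z j := h1
    have h2' : (∑ j : Fin n, z j) ≤ 1 := h2
    refine ⟨fun i => ?_, ?_⟩
    · refine Fin.cases ?_ (fun j => ?_) i
      · rw [Fin.insertNth_apply_same]; exact ht.1.le
      · rw [show (Fin.succ j : Fin (n+2-1)) = Fin.succAbove 0 j from (congrFun Fin.succAbove_zero j).symm,
          Fin.insertNth_apply_succAbove]
        exact mul_nonneg hc.le (h1' j)
    · rw [hsum]
      nlinarith


lemma dirW_insertNth {n : ℕ} (α : Fin (n+2) → ℝ) {t : ℝ} (ht : t ∈ Ioo (0:ℝ) 1)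
    {z : Fin n → ℝ} (hz : z ∈ Tset (n+1)) :
    dirW (n+2) α (Fin.insertNth (0 : Fin (n+1)) t ((1-t) • z))
      = (t ^ (α 0 - 1) * (1-t) ^ (∑ j : Fin (n+1), (α j.succ - 1)))
          * dirW (n+1) (fun j => α j.succ) z := by
  have hc : (0:ℝ) < 1 - t := by linarith [ht.2]
  unfold dirW
  rw [bar_insertNth, Fin.prod_univ_succ, Fin.cons_zero]
  simp only [Fin.cons_succ]
  rw [show (∏ j : Fin (n+1), ((1-t) * bar (n+1) z j) ^ (α j.succ - 1))
      = ∏ j : Fin (n+1), ((1-t) ^ (α j.succ - 1) * bar (n+1) z j ^ (α j.succ - 1)) from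
    Finset.prod_congr rfl fun j _ => Real.mul_rpow hc.le (bar_nonneg hz j)]
  rw [Finset.prod_mul_distrib, ← Real.rpow_sum_of_pos hc]
  ring


lemma key (n : ℕ) : ∀ (α : Fin (n+1) → ℝ), (∀ i, 0 < α i) →
    ∫⁻ x in Tset (n+1), ENNReal.ofReal (dirW (n+1) α x)
      = ENNReal.ofReal ((∏ i, Real.Gamma (α i)) / Real.Gamma (∑ i, α i)) := by
  induction n with
  | zero =>
    intro α hα
    have hT : Tset 1 = univ := by
      ext x
      simp [Tset]
    have hW : ∀ x, dirW 1 α x = 1 := by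
      intro x
      unfold dirW
      rw [Fin.prod_univ_one, bar_neg' x 0 (by simp)]
      rw [show (∑ j : Fin (1-1), x j) = 0 by simp]
      simp
    have hvol : (volume : Measure (Fin (1-1) → ℝ)) univ = 1 := by
      rw [volume_pi, Measure.pi_univ]
      simp
    simp only [hT, hW, Measure.restrict_univ, lintegral_const, hvol, mul_one,
      Fin.prod_univ_one, Fin.sum_univ_one]
    simp
    rw [div_self (Real.Gamma_pos_of_pos (hα 0)).ne', ENNReal.ofReal_one]
  | succ n ih =>
    intro α hα
    have ha : 0 < α 0 := hα 0
    set α' : Fin (n+1) → ℝ := fun j => α (Fin.succ j) with hα'def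
    have hα' : ∀ j, 0 < α' j := fun j => hα _
    set β : ℝ := ∑ j, α' j with hβdef
    have hβ : 0 < β := Finset.sum_pos (fun j _ => hα' j) Finset.univ_nonempty
    have hΓβ : 0 < Real.Gamma β := Real.Gamma_pos_of_pos hβ
    have hΓaβ : 0 < Real.Gamma (α 0 + β) := Real.Gamma_pos_of_pos (by linarith)
    set P' : ℝ := (∏ j, Real.Gamma (α' j)) / Real.Gamma β with hP'def
    have hP' : 0 ≤ P' := le_of_lt (div_pos (Finset.prod_pos fun j _ =>
      Real.Gamma_pos_of_pos (hα' j)) hΓβ)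
    set f : (Fin (n+1) → ℝ) → ENNReal :=
      (Tset (n+2)).indicator (fun x => ENNReal.ofReal (dirW (n+2) α x)) with hfdef
    have hfmeas : Measurable f :=
      ((measurable_dirW (n+2) α).ennreal_ofReal).indicator (measurableSet_Tset (n+2))
    have step0 : ∫⁻ x in Tset (n+2), ENNReal.ofReal (dirW (n+2) α x) = ∫⁻ x, f x :=
      (lintegral_indicator (measurableSet_Tset (n+2)) _).symm
    -- measure preserving decomposition
    set e := MeasurableEquiv.piFinSuccAbove (fun _ : Fin (n+1) => ℝ) 0 with hedef
    have hmp : MeasurePreserving e (volume : Measure (Fin (n+1) → ℝ))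
        ((volume : Measure ℝ).prod (volume : Measure (Fin n → ℝ))) := by
      have h := measurePreserving_piFinSuccAbove (fun _ : Fin (n+1) => (volume : Measure ℝ)) 0
      exact h
    have hsymm : ∀ p : ℝ × (Fin n → ℝ), e.symm p = Fin.insertNth 0 p.1 p.2 := by
      intro p
      rw [hedef, MeasurableEquiv.piFinSuccAbove_symm_apply]
      rfl
    have hinsmeas : ∀ t : ℝ, Measurable fun y : Fin n → ℝ => f (Fin.insertNth 0 t y) := by
      intro t
      have : (fun y : Fin n → ℝ => f (Fin.insertNth 0 t y))
          = fun y => f (e.symm (t, y)) := by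
        funext y; rw [hsymm]
      rw [this]
      exact (hfmeas.comp e.symm.measurable).comp measurable_prodMk_left
    have step1 : ∫⁻ x, f x
        = ∫⁻ t : ℝ, ∫⁻ y : Fin n → ℝ, f (Fin.insertNth 0 t y) := by
      rw [← (hmp.symm e).map_eq, lintegral_map hfmeas e.symm.measurable]
      rw [lintegral_prod (fun p : ℝ × (Fin n → ℝ) => f (e.symm p))
        ((hfmeas.comp e.symm.measurable).aemeasurable)]
      refine lintegral_congr fun t => lintegral_congr fun y => ?_
      rw [hsymm]
    set G : ℝ → ENNReal := fun t => ∫⁻ y : Fin n → ℝ, f (Fin.insertNth 0 t y) with hGdef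
    -- G vanishes outside [0,1]
    have hGzero : ∀ t : ℝ, t ∉ Icc (0:ℝ) 1 → G t = 0 := by
      intro t ht
      have : ∀ y : Fin n → ℝ, f (Fin.insertNth 0 t y) = 0 := by
        intro y
        refine indicator_of_notMem ?_ _
        rintro ⟨h1, h2⟩
        simp only [mem_Icc, not_and_or, not_le] at ht
        rcases lt_or_ge t 0 with h | h
        · have h0 := h1 ((0 : Fin (n+1)) : Fin (n+2-1))
          rw [Fin.insertNth_apply_same] at h0
          linarith
        · have h1t : 1 < t := by
            rcases ht with h' | h'
            · linarith
            · linarith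
          have hsum : (∑ i : Fin (n+2-1), Fin.insertNth (0 : Fin (n+1)) t y i)
              = t + ∑ j, y j := sum_insertNth_zero t y
          have hy : 0 ≤ ∑ j, y j := Finset.sum_nonneg fun j _ => by
            have := h1 (Fin.succAbove 0 j)
            rwa [Fin.insertNth_apply_succAbove] at this
          rw [hsum] at h2
          linarith
      rw [hGdef]
      simp only [this, lintegral_zero]
    have step2 : ∫⁻ t : ℝ, G t = ∫⁻ t in Ioo (0:ℝ) 1, G t := by
      rw [← lintegral_indicator measurableSet_Ioo]
      refine lintegral_congr_ae ?_
      have hns : volume ({0, 1} : Set ℝ) = 0 :=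
        Set.Finite.measure_zero (by simp) _
      rw [Filter.EventuallyEq, ae_iff]
      refine measure_mono_null (fun t htne => ?_) hns
      simp only [mem_setOf_eq] at htne
      by_contra htm
      simp only [mem_insert_iff, mem_singleton_iff, not_or] at htm
      by_cases hIoo : t ∈ Ioo (0:ℝ) 1
      · exact htne (indicator_of_mem hIoo G).symm
      · refine htne ?_
        rw [indicator_of_notMem hIoo]
        refine hGzero t fun hIcc => hIoo ?_
        rcases eq_or_lt_of_le hIcc.1 with h | h
        · exact absurd h.symm htm.1
        rcases eq_or_lt_of_le hIcc.2 with h' | h'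
        · exact absurd h' htm.2
        exact ⟨h, h'⟩
    -- compute G on Ioo 0 1
    have step3 : ∀ t ∈ Ioo (0:ℝ) 1,
        G t = ENNReal.ofReal (t ^ (α 0 - 1) * (1-t) ^ (β - 1)) * ENNReal.ofReal P' := by
      intro t ht
      have hc : (0:ℝ) < 1 - t := by linarith [ht.2]
      have hcn : (0:ℝ) < (1-t) ^ n := pow_pos hc n
      -- pointwise formula after scaling
      have hptw : ∀ z : Fin n → ℝ, f (Fin.insertNth 0 t ((1-t) • z))
          = (Tset (n+1)).indicator
              (fun z => ENNReal.ofReal ((t ^ (α 0 - 1) * (1-t) ^ (∑ j : Fin (n+1), (α' j - 1)))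
                * dirW (n+1) α' z)) z := by
        intro z
        by_cases hz : z ∈ Tset (n+1)
        · rw [indicator_of_mem hz, hfdef,
            indicator_of_mem ((mem_Tset_insertNth ht z).mpr hz),
            dirW_insertNth α ht hz]
        · rw [indicator_of_notMem hz, hfdef,
            indicator_of_notMem (fun hmem => hz ((mem_Tset_insertNth ht z).mp hmem))]
      have hSexp : (∑ j : Fin (n+1), (α' j - 1)) = β - (n+1 : ℕ) := by
        rw [Finset.sum_sub_distrib, ← hβdef]
        simp
      have hconst : 0 ≤ t ^ (α 0 - 1) * (1-t) ^ (∑ j : Fin (n+1), (α' j - 1)) :=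
        mul_nonneg (Real.rpow_nonneg ht.1.le _) (Real.rpow_nonneg hc.le _)
      have hscaled : ∫⁻ z : Fin n → ℝ, f (Fin.insertNth 0 t ((1-t) • z))
          = ENNReal.ofReal (t ^ (α 0 - 1) * (1-t) ^ (∑ j : Fin (n+1), (α' j - 1)))
            * ENNReal.ofReal P' := by
        rw [lintegral_congr hptw]
        erw [lintegral_indicator (measurableSet_Tset (n+1))]
        have : ∀ z, ENNReal.ofReal ((t ^ (α 0 - 1) * (1-t) ^ (∑ j : Fin (n+1), (α' j - 1)))
                * dirW (n+1) α' z)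
            = ENNReal.ofReal (t ^ (α 0 - 1) * (1-t) ^ (∑ j : Fin (n+1), (α' j - 1)))
                * ENNReal.ofReal (dirW (n+1) α' z) := fun z => ENNReal.ofReal_mul hconst
        simp only [this]
        rw [lintegral_const_mul _ ((measurable_dirW (n+1) α').ennreal_ofReal)]
        rw [ih α' hα', ← hβdef, ← hP'def]
      -- scaling identity
      have hmap : Measure.map (fun z : Fin n → ℝ => (1-t) • z) volume
          = ENNReal.ofReal |((1-t) ^ n)⁻¹| • (volume : Measure (Fin n → ℝ)) := by
        have := Measure.map_addHaar_smul (volume : Measure (Fin n → ℝ)) (r := 1-t) hc.ne'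
        rwa [Module.finrank_fin_fun] at this
      have hGt : G t = ENNReal.ofReal ((1-t) ^ n)
          * ∫⁻ z : Fin n → ℝ, f (Fin.insertNth 0 t ((1-t) • z)) := by
        have hcomp : ∫⁻ z : Fin n → ℝ, f (Fin.insertNth 0 t ((1-t) • z))
            = ENNReal.ofReal (((1-t) ^ n)⁻¹) * G t := by
          have h1 : ∫⁻ z : Fin n → ℝ, f (Fin.insertNth 0 t ((1-t) • z))
              = ∫⁻ y, f (Fin.insertNth 0 t y)
                  ∂(Measure.map (fun z : Fin n → ℝ => (1-t) • z) volume) := by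
            rw [lintegral_map (hinsmeas t) (measurable_const_smul _)]
          rw [h1, hmap, lintegral_smul_measure, abs_of_pos (by positivity), smul_eq_mul]
        rw [hcomp, ← mul_assoc, ← ENNReal.ofReal_mul hcn.le,
          mul_inv_cancel₀ hcn.ne', ENNReal.ofReal_one, one_mul]
      rw [hGt, hscaled, ← mul_assoc, ← ENNReal.ofReal_mul hcn.le]
      congr 2
      rw [hSexp, ← Real.rpow_natCast (1-t) n, ← mul_assoc,
        mul_comm ((1-t) ^ (n:ℝ)) (t ^ (α 0 - 1)), mul_assoc, ← Real.rpow_add hc]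
      congr 2
      push_cast
      ring
    have hbetam : Measurable fun t : ℝ => ENNReal.ofReal (t ^ (α 0 - 1) * (1-t) ^ (β - 1)) := by
      apply Measurable.ennreal_ofReal
      fun_prop
    have step4 : ∫⁻ t in Ioo (0:ℝ) 1, G t
        = ENNReal.ofReal (Real.Gamma (α 0) * Real.Gamma β / Real.Gamma (α 0 + β))
            * ENNReal.ofReal P' := by
      rw [setLIntegral_congr_fun measurableSet_Ioo step3]
      rw [lintegral_mul_const _ hbetam]
      rw [realBeta_lintegral ha hβ]
    -- final arithmetic
    rw [step0, step1]
    rw [show (∫⁻ t : ℝ, ∫⁻ y : Fin n → ℝ, f (Fin.insertNth 0 t y)) = ∫⁻ t : ℝ, G t from rfl]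
    rw [step2, step4]
    rw [← ENNReal.ofReal_mul (by positivity)]
    congr 1
    rw [hP'def, Fin.prod_univ_succ, Fin.sum_univ_succ, ← hβdef]
    field_simp
    simp only [hα'def]
    rw [Fin.prod_univ_succ (fun i : Fin (n+1+1) => Real.Gamma (α i)),
        Fin.prod_univ_succ (fun i : Fin (n+1) => Real.Gamma (α i.succ))]
    ring


/-- The Dirichlet weight is integrable on `T_k` and its integral is
`(∏ Γ(α_i)) / Γ(α_0)`. -/
theorem dirichlet_normalization (k : ℕ) (hk : 1 ≤ k) (α : Fin k → ℝ)
    (hα : ∀ i, 0 < α i) :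
    IntegrableOn (dirW k α) (Tset k) volume ∧
      ∫ x in Tset k, dirW k α x =
        (∏ i, Real.Gamma (α i)) / Real.Gamma (∑ i, α i) := by

  obtain ⟨n, rfl⟩ : ∃ n, k = n + 1 := ⟨k - 1, (Nat.succ_pred_eq_of_pos hk).symm⟩
  have hkey := key n α hα
  have hQ : 0 ≤ (∏ i, Real.Gamma (α i)) / Real.Gamma (∑ i, α i) :=
    div_nonneg (Finset.prod_nonneg fun i _ => (Real.Gamma_pos_of_pos (hα i)).le)
      (Real.Gamma_pos_of_pos (Finset.sum_pos (fun i _ => hα i) Finset.univ_nonempty)).le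
  have hnn : 0 ≤ᵐ[volume.restrict (Tset (n+1))] dirW (n+1) α := by
    filter_upwards [ae_restrict_mem (measurableSet_Tset (n+1))] with x hx
    exact dirW_nonneg α hx
  have hint : IntegrableOn (dirW (n+1) α) (Tset (n+1)) volume := by
    refine ⟨(measurable_dirW (n+1) α).aestronglyMeasurable, ?_⟩
    rw [hasFiniteIntegral_iff_ofReal hnn, hkey]
    exact ENNReal.ofReal_lt_top
  refine ⟨hint, ?_⟩
  rw [integral_eq_lintegral_of_nonneg_ae hnn (measurable_dirW (n+1) α).aestronglyMeasurable,
    hkey, ENNReal.toReal_ofReal hQ]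
end
end

section
/- (Whitening orthonormalizes the latent components.) Let k ≤ n, let f_1, …, f_k ∈ ℝ^n be linearly independent, let α̂_1, …, α̂_k > 0 be reals, and let M := Σ_{i=1}^k α̂_i f_i f_iᵀ. If W ∈ ℝ^{n×k} satisfies Wᵀ M W = I_k, then the vectors v_i := √(α̂_i) · Wᵀ f_i, for i = 1, …, k, form an orthonormal basis of ℝ^k. -/
open Matrix

/-- Whitening orthonormalizes the latent components: if `Wᵀ M W = I` for
`M = Σ_i α̂_i f_i f_iᵀ` with `f_i` linearly independent and `α̂_i > 0`, then the
vectors `v_i = √α̂_i · Wᵀ f_i` form an orthonormal basis of `ℝ^k`. -/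
theorem whitening_orthonormalizes (n k : ℕ) (hk : 0 < k) (hkn : k ≤ n)
    (f : Fin k → Fin n → ℝ) (hf : LinearIndependent ℝ f)
    (α : Fin k → ℝ) (hα : ∀ i, 0 < α i)
    (W : Matrix (Fin n) (Fin k) ℝ)
    (hW : Wᵀ * (∑ i, α i • vecMulVec (f i) (f i)) * W = 1) :
    (∀ i j, (Real.sqrt (α i) • Wᵀ.mulVec (f i)) ⬝ᵥ (Real.sqrt (α j) • Wᵀ.mulVec (f j)) =
        if i = j then 1 else 0) ∧
      Submodule.span ℝ (Set.range fun i => Real.sqrt (α i) • Wᵀ.mulVec (f i)) = ⊤ := by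
  set A : Matrix (Fin k) (Fin k) ℝ :=
    fun p l => Real.sqrt (α l) * (Wᵀ.mulVec (f l)) p with hA
  have hsq : ∀ l, Real.sqrt (α l) * Real.sqrt (α l) = α l := fun l =>
    Real.mul_self_sqrt (hα l).le
  have hAAT : A * Aᵀ = 1 := by
    rw [← hW]
    ext p q
    simp only [Matrix.mul_apply, Matrix.transpose_apply]
    simp only [hA, Matrix.mul_apply, Matrix.transpose_apply, Matrix.sum_apply,
      Matrix.smul_apply, vecMulVec_apply, mulVec, dotProduct, smul_eq_mul,
      Finset.mul_sum, Finset.sum_mul]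
    rw [Finset.sum_comm]
    refine Finset.sum_congr rfl fun l _ => ?_
    rw [Finset.sum_comm]
    refine Finset.sum_congr rfl fun r _ => ?_
    refine Finset.sum_congr rfl fun s _ => ?_
    conv_rhs => rw [← hsq s]
    ring
  have hATA : Aᵀ * A = 1 := mul_eq_one_comm.mp hAAT
  constructor
  · intro i j
    have h := congrFun (congrFun hATA i) j
    simp only [Matrix.mul_apply, Matrix.transpose_apply] at h
    simp only [Matrix.mul_apply, Matrix.transpose_apply, hA, Matrix.one_apply] at h
    simpa [dotProduct, mul_comm, mul_left_comm, mul_assoc] using h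
  · rw [eq_top_iff]
    intro x _
    have hx : x = ∑ i, (Aᵀ.mulVec x i) • (Real.sqrt (α i) • Wᵀ.mulVec (f i)) := by
      have : A.mulVec (Aᵀ.mulVec x) = x := by
        rw [Matrix.mulVec_mulVec, hAAT, Matrix.one_mulVec]
      funext p
      calc x p = A.mulVec (Aᵀ.mulVec x) p := by rw [this]
        _ = ∑ i, (Aᵀ.mulVec x i) • (Real.sqrt (α i) • Wᵀ.mulVec (f i)) p := by
            simp [Matrix.mulVec, dotProduct, hA, mul_comm, mul_left_comm]
      simp [Finset.sum_apply]
    rw [hx]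
    exact Submodule.sum_mem _ fun i _ =>
      Submodule.smul_mem _ _ (Submodule.subset_span ⟨i, rfl⟩)
end

section
/- (Whitened third moment is orthogonally decomposable; correctness of the whitening + tensor decomposition pipeline.) Let k ≤ n, let f_1, …, f_k ∈ ℝ^n be linearly independent, let α̂_1, …, α̂_k > 0, let M := Σ_{i=1}^k α̂_i f_i f_iᵀ, and let W ∈ ℝ^{n×k} satisfy Wᵀ M W = I_k. Define the whitened tensor T by T_{pqr} := Σ_{i=1}^k α̂_i (Wᵀf_i)_p (Wᵀf_i)_q (Wᵀf_i)_r, and set v_i := √(α̂_i) Wᵀ f_i and λ_i := α̂_i^{−1/2}. Then for every j and every p: Σ_{q=1}^k Σ_{r=1}^k T_{pqr} v_j(q) v_j(r) = λ_j v_j(p); i.e., the v_j are orthonormal eigenvectors of T with eigenvalues λ_j = α̂_j^{−1/2}. -/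
open Matrix

/-- The whitened third moment is orthogonally decomposable: with
`M = Σ_i α̂_i f_i f_iᵀ`, `Wᵀ M W = I`, `T_{pqr} = Σ_i α̂_i (Wᵀf_i)_p (Wᵀf_i)_q (Wᵀf_i)_r`,
`v_i = √α̂_i Wᵀ f_i` and `λ_i = α̂_i^{-1/2}`, one has `T(I, v_j, v_j) = λ_j v_j`. -/
theorem whitened_tensor_eigenpairs (n k : ℕ) (hk : 0 < k) (hkn : k ≤ n)
    (f : Fin k → Fin n → ℝ) (hf : LinearIndependent ℝ f)
    (α : Fin k → ℝ) (hα : ∀ i, 0 < α i)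
    (W : Matrix (Fin n) (Fin k) ℝ)
    (hW : Wᵀ * (∑ i, α i • vecMulVec (f i) (f i)) * W = 1)
    (j p : Fin k) :
    ∑ q, ∑ r,
        (∑ i, α i * Wᵀ.mulVec (f i) p * Wᵀ.mulVec (f i) q * Wᵀ.mulVec (f i) r) *
          (Real.sqrt (α j) • Wᵀ.mulVec (f j)) q *
          (Real.sqrt (α j) • Wᵀ.mulVec (f j)) r =
      α j ^ (-(1 : ℝ) / 2) * (Real.sqrt (α j) • Wᵀ.mulVec (f j)) p := by
  set g : Fin k → Fin k → ℝ := fun i => Wᵀ.mulVec (f i) with hg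
  set A : Matrix (Fin k) (Fin k) ℝ := Matrix.of g with hA
  -- Step 1: Aᵀ * (diagonal α * A) = 1
  have h1 : Aᵀ * (Matrix.diagonal α * A) = 1 := by
    rw [← hW]
    ext x y
    simp only [Matrix.mul_apply, Matrix.transpose_apply, Matrix.sum_apply,
      Matrix.smul_apply, Matrix.vecMulVec_apply, smul_eq_mul, hA, Matrix.of_apply,
      Matrix.diagonal_apply, ite_mul, zero_mul, Finset.sum_ite_eq, Finset.mem_univ,
      if_true]
    have lhs : ∑ i, g i x * (α i * g i y) = ∑ i, α i * g i x * g i y := by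
      apply Finset.sum_congr rfl; intro i _; ring
    rw [lhs]
    have hgz : ∀ (z : Fin k) (i : Fin k), g i z = ∑ a : Fin n, W a z * f i a := by
      intro z i
      simp [hg, Matrix.mulVec, dotProduct, Matrix.transpose_apply, mul_comm]
    symm
    calc ∑ b : Fin n, (∑ a : Fin n, W a x * ∑ i, α i * (f i a * f i b)) * W b y
        = ∑ b : Fin n, ∑ a : Fin n, ∑ i, α i * (W a x * f i a) * (W b y * f i b) := by
          apply Finset.sum_congr rfl; intro b _
          rw [Finset.sum_mul]
          apply Finset.sum_congr rfl; intro a _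
          rw [Finset.mul_sum, Finset.sum_mul]
          apply Finset.sum_congr rfl; intro i _; ring
      _ = ∑ a : Fin n, ∑ b : Fin n, ∑ i, α i * (W a x * f i a) * (W b y * f i b) :=
          Finset.sum_comm
      _ = ∑ a : Fin n, ∑ i, ∑ b : Fin n, α i * (W a x * f i a) * (W b y * f i b) := by
          apply Finset.sum_congr rfl; intro a _; exact Finset.sum_comm
      _ = ∑ i, ∑ a : Fin n, ∑ b : Fin n, α i * (W a x * f i a) * (W b y * f i b) :=
          Finset.sum_comm
      _ = ∑ i, α i * g i x * g i y := by
          apply Finset.sum_congr rfl; intro i _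
          rw [hgz x i, hgz y i, mul_assoc, Finset.sum_mul_sum, Finset.mul_sum]
          apply Finset.sum_congr rfl; intro a _
          rw [Finset.mul_sum]
          apply Finset.sum_congr rfl; intro b _
          ring
  -- Step 2: A * Aᵀ = diagonal α⁻¹
  have h2 : A * Aᵀ = Matrix.diagonal (fun i => (α i)⁻¹) := by
    have h1' : (Aᵀ * Matrix.diagonal α) * A = 1 := by rw [Matrix.mul_assoc]; exact h1
    have h1'' : A * (Aᵀ * Matrix.diagonal α) = 1 := mul_eq_one_comm.mp h1'
    have hD : Matrix.diagonal α * Matrix.diagonal (fun i => (α i)⁻¹) = 1 := by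
      rw [Matrix.diagonal_mul_diagonal]
      have he : (fun i => α i * (α i)⁻¹) = fun _ => (1:ℝ) :=
        funext fun i => mul_inv_cancel₀ (ne_of_gt (hα i))
      rw [he, Matrix.diagonal_one]
    calc A * Aᵀ = A * Aᵀ * (Matrix.diagonal α * Matrix.diagonal (fun i => (α i)⁻¹)) := by
          rw [hD, Matrix.mul_one]
      _ = (A * (Aᵀ * Matrix.diagonal α)) * Matrix.diagonal (fun i => (α i)⁻¹) := by
          simp only [Matrix.mul_assoc]
      _ = Matrix.diagonal (fun i => (α i)⁻¹) := by rw [h1'', Matrix.one_mul]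
  have h3 : ∀ i i' : Fin k, (∑ q, g i q * g i' q) = if i = i' then (α i)⁻¹ else 0 := by
    intro i i'
    have := congrArg (fun X => X i i') h2
    simpa [Matrix.mul_apply, Matrix.transpose_apply, Matrix.diagonal_apply, hA] using this
  -- Final computation
  simp only [Pi.smul_apply, smul_eq_mul]
  have key : ∑ q, ∑ r,
      (∑ i, α i * g i p * g i q * g i r) * (Real.sqrt (α j) * g j q) *
        (Real.sqrt (α j) * g j r)
      = ∑ i, α i * g i p * Real.sqrt (α j) ^ 2 * (∑ q, g i q * g j q) *
          (∑ r, g i r * g j r) := by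
    calc ∑ q, ∑ r, (∑ i, α i * g i p * g i q * g i r) * (Real.sqrt (α j) * g j q) *
          (Real.sqrt (α j) * g j r)
        = ∑ q, ∑ r, ∑ i, (α i * g i p) * Real.sqrt (α j) ^ 2 * (g i q * g j q) *
            (g i r * g j r) := by
          apply Finset.sum_congr rfl; intro q _
          apply Finset.sum_congr rfl; intro r _
          rw [Finset.sum_mul, Finset.sum_mul]
          apply Finset.sum_congr rfl; intro i _
          ring
      _ = ∑ q, ∑ i, ∑ r, (α i * g i p) * Real.sqrt (α j) ^ 2 * (g i q * g j q) *
            (g i r * g j r) := by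
          apply Finset.sum_congr rfl; intro q _
          exact Finset.sum_comm
      _ = ∑ i, ∑ q, ∑ r, (α i * g i p) * Real.sqrt (α j) ^ 2 * (g i q * g j q) *
            (g i r * g j r) := Finset.sum_comm
      _ = ∑ i, α i * g i p * Real.sqrt (α j) ^ 2 * (∑ q, g i q * g j q) *
            (∑ r, g i r * g j r) := by
          apply Finset.sum_congr rfl; intro i _
          simp only [Finset.mul_sum, Finset.sum_mul]
          apply Finset.sum_congr rfl; intro q _
          apply Finset.sum_congr rfl; intro r _
          ring
  rw [key]
  have hsq : Real.sqrt (α j) ^ 2 = α j := Real.sq_sqrt (le_of_lt (hα j))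
  have hsum : ∑ i, α i * g i p * Real.sqrt (α j) ^ 2 * (∑ q, g i q * g j q) *
      (∑ r, g i r * g j r) = g j p := by
    rw [Finset.sum_eq_single j]
    · rw [h3 j j, if_pos rfl, hsq]
      have hne : α j ≠ 0 := ne_of_gt (hα j)
      calc α j * g j p * α j * (α j)⁻¹ * (α j)⁻¹
          = (α j * (α j)⁻¹) * (α j * (α j)⁻¹) * g j p := by ring
        _ = g j p := by rw [mul_inv_cancel₀ hne]; ring
    · intro i _ hij
      rw [h3 i j, if_neg hij]
      ring
    · intro h; exact absurd (Finset.mem_univ j) h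
  rw [hsum]
  have : α j ^ (-(1 : ℝ) / 2) * Real.sqrt (α j) = 1 := by
    rw [Real.sqrt_eq_rpow, ← Real.rpow_add (hα j)]
    norm_num
  rw [← mul_assoc, this, one_mul]
end

section
/- (Post-processing recovery of the components, un-whitening lemma.) Let k ≤ n, let f_1, …, f_k ∈ ℝ^n be linearly independent, let α̂_1, …, α̂_k > 0, let M := Σ_{i=1}^k α̂_i f_i f_iᵀ, and let W ∈ ℝ^{n×k} satisfy Wᵀ M W = I_k, with every column of W lying in span{f_1, …, f_k}. Then Wᵀ W is invertible, and with v_i := √(α̂_i) Wᵀ f_i and λ_i := α̂_i^{−1/2} one has W (WᵀW)^{−1} (λ_i v_i) = f_i for every i ∈ {1,…,k}; equivalently, W(WᵀW)^{−1}Wᵀ f_i = f_i, so applying the pseudoinverse (Wᵀ)† = W(WᵀW)^{−1} to the scaled tensor eigenvectors recovers the components f_i exactly. -/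
open Matrix

/-- Post-processing (un-whitening): if `Wᵀ M W = I` for `M = Σ_i α̂_i f_i f_iᵀ`
and the columns of `W` lie in `span{f_1,…,f_k}`, then `Wᵀ W` is invertible and
`W (WᵀW)⁻¹ (λ_i v_i) = f_i` where `v_i = √α̂_i Wᵀ f_i` and `λ_i = α̂_i^{-1/2}`. -/
theorem unwhitening_recovers_components (n k : ℕ) (hk : 0 < k) (hkn : k ≤ n)
    (f : Fin k → Fin n → ℝ) (hf : LinearIndependent ℝ f)
    (α : Fin k → ℝ) (hα : ∀ i, 0 < α i)
    (W : Matrix (Fin n) (Fin k) ℝ)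
    (hW : Wᵀ * (∑ i, α i • vecMulVec (f i) (f i)) * W = 1)
    (hWcol : ∀ j : Fin k, (fun p => W p j) ∈ Submodule.span ℝ (Set.range f)) :
    IsUnit (Wᵀ * W).det ∧
      ∀ i, (W * (Wᵀ * W)⁻¹).mulVec
          ((α i ^ (-(1 : ℝ) / 2)) • (Real.sqrt (α i) • Wᵀ.mulVec (f i))) = f i := by
  set M : Matrix (Fin n) (Fin n) ℝ := ∑ i, α i • vecMulVec (f i) (f i) with hM
  -- W is injective
  have hWinj : Function.Injective W.mulVec := by
    intro x y hxy
    have h1 := congrArg (fun v => Wᵀ *ᵥ M *ᵥ v) hxy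
    have hW' : Wᵀ * (M * W) = 1 := by rw [← Matrix.mul_assoc]; exact hW
    simpa [Matrix.mulVec_mulVec, hW', Matrix.one_mulVec] using h1
  -- WᵀW is injective hence invertible
  have hWtWinj : Function.Injective (Wᵀ * W).mulVec := by
    intro x y hxy
    apply hWinj
    set u := x - y with hu
    have hu0 : (Wᵀ * W) *ᵥ u = 0 := by
      rw [hu, Matrix.mulVec_sub, hxy, sub_self]
    have h0 : (W *ᵥ u) ⬝ᵥ (W *ᵥ u) = 0 := by
      rw [Matrix.dotProduct_mulVec, ← Matrix.mulVec_transpose, Matrix.mulVec_mulVec, hu0,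
        zero_dotProduct]
    have h1 := dotProduct_self_eq_zero.mp h0
    rw [hu, Matrix.mulVec_sub] at h1
    exact sub_eq_zero.mp h1
  have hunit : IsUnit (Wᵀ * W).det :=
    (Matrix.isUnit_iff_isUnit_det _).mp (Matrix.mulVec_injective_iff_isUnit.mp hWtWinj)
  refine ⟨hunit, fun i => ?_⟩
  -- f i is in the range of W.mulVec
  have hrange : LinearMap.range W.mulVecLin = Submodule.span ℝ (Set.range f) := by
    apply Submodule.eq_of_le_of_finrank_le
    · rw [Matrix.range_mulVecLin]
      rw [Submodule.span_le]
      rintro v ⟨j, rfl⟩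
      exact hWcol j
    · have h1 : Module.finrank ℝ (Submodule.span ℝ (Set.range f)) = k := by
        rw [finrank_span_eq_card hf, Fintype.card_fin]
      have h2 : Module.finrank ℝ (LinearMap.range W.mulVecLin) = k := by
        rw [LinearMap.finrank_range_of_inj hWinj]
        simp
      rw [h1, h2]
  have hfi : f i ∈ LinearMap.range W.mulVecLin := by
    rw [hrange]; exact Submodule.subset_span ⟨i, rfl⟩
  obtain ⟨c, hc⟩ := hfi
  simp only [Matrix.mulVecLin_apply] at hc
  -- scalar simplification
  have hscal : (α i ^ (-(1 : ℝ) / 2)) * Real.sqrt (α i) = 1 := by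
    rw [Real.sqrt_eq_rpow, ← Real.rpow_add (hα i)]
    norm_num
  rw [smul_smul, hscal, one_smul, ← hc, Matrix.mulVec_mulVec, Matrix.mulVec_mulVec,
    Matrix.mul_assoc (W * (Wᵀ * W)⁻¹) Wᵀ W, Matrix.nonsing_inv_mul_cancel_right _ _ hunit, hc]
end

section
/- (Correctness of the randomized/Nyström whitening matrix.) Let F ∈ ℝ^{n×k} have rank k, set M := F Fᵀ, and let S ∈ ℝ^{n×k} be such that Ω := Sᵀ M S is invertible. Put O := M S. Then OᵀO is invertible, Ω is symmetric positive definite, and the matrix W := O (OᵀO)^{−1} Ω^{1/2}, where Ω^{1/2} is the unique symmetric positive semidefinite square root of Ω, satisfies Wᵀ M W = I_k. -/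
open Matrix

private lemma gram_posDef (n k : ℕ) (F : Matrix (Fin n) (Fin k) ℝ) (hF : F.rank = k) :
    (Fᵀ * F).PosDef := by
  have hinj : Function.Injective F.mulVecLin := by
    rw [← LinearMap.ker_eq_bot]
    have h1 := F.mulVecLin.finrank_range_add_finrank_ker
    rw [Matrix.rank] at hF
    have h2 : Module.finrank ℝ (Fin k → ℝ) = k := by simp
    rw [hF, h2] at h1
    have : Module.finrank ℝ (LinearMap.ker F.mulVecLin) = 0 := by omega
    exact Submodule.finrank_eq_zero.mp this
  have hpsd : (Fᵀ * F).PosSemidef := by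
    have := Matrix.posSemidef_conjTranspose_mul_self F
    rwa [Matrix.conjTranspose_eq_transpose_of_trivial] at this
  refine posDef_iff_dotProduct_mulVec.mpr ⟨hpsd.1, fun x hx => lt_of_le_of_ne (hpsd.dotProduct_mulVec_nonneg x) ?_⟩
  intro h
  apply hx
  have h0 : (Fᵀ * F) *ᵥ x = 0 := (hpsd.dotProduct_mulVec_zero_iff x).mp h.symm
  have hFx : F *ᵥ x = 0 := by
    have h1 : Fᵀ *ᵥ (F *ᵥ x) = 0 := by rwa [mulVec_mulVec]
    have h2 : (F *ᵥ x) ⬝ᵥ (F *ᵥ x) = 0 := by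
      rw [← mulVec_mulVec] at h0
      calc (F *ᵥ x) ⬝ᵥ (F *ᵥ x) = x ⬝ᵥ (Fᵀ *ᵥ (F *ᵥ x)) := by
            rw [dotProduct_mulVec, ← mulVec_transpose, dotProduct_comm, dotProduct_mulVec,
              ← mulVec_transpose, transpose_transpose, dotProduct_comm]
        _ = 0 := by rw [h1, dotProduct_zero]
    exact (dotProduct_self_eq_zero).mp h2
  have : F.mulVecLin x = F.mulVecLin 0 := by simpa using hFx
  exact hinj this

private lemma gram_posDef' (n k : ℕ) (A : Matrix (Fin n) (Fin k) ℝ)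
    (hdet : IsUnit (Aᵀ * A).det) : (Aᵀ * A).PosDef := by
  have hpsd : (Aᵀ * A).PosSemidef := by
    have := Matrix.posSemidef_conjTranspose_mul_self A
    rwa [Matrix.conjTranspose_eq_transpose_of_trivial] at this
  have hU : IsUnit (Aᵀ * A) := (Matrix.isUnit_iff_isUnit_det _).mpr hdet
  refine posDef_iff_dotProduct_mulVec.mpr ⟨hpsd.1, fun x hx => lt_of_le_of_ne (hpsd.dotProduct_mulVec_nonneg x) ?_⟩
  intro h
  have h0 : (Aᵀ * A) *ᵥ x = 0 := (hpsd.dotProduct_mulVec_zero_iff x).mp h.symm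
  have := Matrix.mulVec_injective_iff_isUnit.mpr hU
  apply hx
  apply this
  simpa using h0

/-- Correctness of the randomized (Nyström) whitening matrix: with `M = F Fᵀ`,
`F` of full column rank `k`, `Ω = Sᵀ M S` invertible and `O = M S`, the matrix
`OᵀO` is invertible, `Ω` is symmetric positive definite, and
`W = O (OᵀO)⁻¹ Ω^{1/2}` (for `Ω^{1/2}` the unique symmetric PSD square root of `Ω`)
satisfies `Wᵀ M W = I_k`. -/
theorem nystrom_whitening (n k : ℕ) (F S : Matrix (Fin n) (Fin k) ℝ)
    (hF : F.rank = k)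
    (hΩ : IsUnit (Sᵀ * (F * Fᵀ) * S).det) :
    IsUnit ((((F * Fᵀ) * S)ᵀ * ((F * Fᵀ) * S)).det) ∧
      (Sᵀ * (F * Fᵀ) * S).PosDef ∧
      ∀ R : Matrix (Fin k) (Fin k) ℝ, R.PosSemidef →
        R * R = Sᵀ * (F * Fᵀ) * S →
        (((F * Fᵀ) * S) * (((F * Fᵀ) * S)ᵀ * ((F * Fᵀ) * S))⁻¹ * R)ᵀ * (F * Fᵀ) *
            (((F * Fᵀ) * S) * (((F * Fᵀ) * S)ᵀ * ((F * Fᵀ) * S))⁻¹ * R) = 1 := by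
  set A : Matrix (Fin k) (Fin k) ℝ := Fᵀ * S with hAdef
  set G : Matrix (Fin k) (Fin k) ℝ := Fᵀ * F with hGdef
  -- Ω = Aᵀ * A
  have hΩA : Sᵀ * (F * Fᵀ) * S = Aᵀ * A := by
    simp [hAdef, Matrix.transpose_mul, Matrix.mul_assoc]
  have hGpd : G.PosDef := gram_posDef n k F hF
  have hGdet : IsUnit G.det := hGpd.det_pos.ne'.isUnit
  have hAdet : IsUnit A.det := by
    rw [hΩA, Matrix.det_mul, Matrix.det_transpose] at hΩ
    exact (isUnit_mul_self_iff.mp hΩ)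
  -- OᵀO = Aᵀ * G * A
  have hOtO : ((F * Fᵀ) * S)ᵀ * ((F * Fᵀ) * S) = Aᵀ * G * A := by
    simp [hAdef, hGdef, Matrix.transpose_mul, Matrix.mul_assoc]
  have hOtOdet : IsUnit (Aᵀ * G * A).det := by
    simp only [Matrix.det_mul, Matrix.det_transpose]
    exact (hAdet.mul hGdet).mul hAdet
  refine ⟨by rw [hOtO]; exact hOtOdet, by rw [hΩA]; exact gram_posDef' k k A (hΩA ▸ hΩ), ?_⟩
  intro R hRpsd hRR
  rw [hΩA] at hRR
  have hRdet : IsUnit R.det := by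
    have : IsUnit (R.det * R.det) := by
      rw [← Matrix.det_mul, hRR, Matrix.det_mul, Matrix.det_transpose]
      exact hAdet.mul hAdet
    exact isUnit_mul_self_iff.mp this
  have hRs : Rᵀ = R := hRpsd.1.eq.symm ▸ hRpsd.1
  haveI := A.invertibleOfIsUnitDet hAdet
  haveI := Aᵀ.invertibleOfIsUnitDet (by rwa [Matrix.det_transpose])
  haveI := G.invertibleOfIsUnitDet hGdet
  haveI := R.invertibleOfIsUnitDet hRdet
  have hinv : (((F * Fᵀ) * S)ᵀ * ((F * Fᵀ) * S))⁻¹ = A⁻¹ * (G⁻¹ * (Aᵀ)⁻¹) := by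
    rw [hOtO, Matrix.mul_inv_rev, Matrix.mul_inv_rev]
  have hO : (F * Fᵀ) * S = F * A := by rw [hAdef, Matrix.mul_assoc]
  have hAAinv : A⁻¹ * (Aᵀ)⁻¹ = R⁻¹ * R⁻¹ := by
    rw [← Matrix.mul_inv_rev, ← hRR, Matrix.mul_inv_rev]
  have hGs : Gᵀ = G := by
    have := hGpd.1
    simpa [Matrix.IsHermitian, Matrix.conjTranspose_eq_transpose_of_trivial] using this
  rw [hinv, hO]
  simp only [Matrix.transpose_mul, Matrix.transpose_nonsing_inv, Matrix.transpose_transpose,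
    hRs, hGs]
  simp only [Matrix.mul_assoc]
  rw [← Matrix.mul_assoc Fᵀ F, ← Matrix.mul_assoc Fᵀ F, ← hGdef]
  simp only [Matrix.inv_mul_cancel_left_of_invertible, Matrix.mul_inv_cancel_left_of_invertible]
  rw [← Matrix.mul_assoc A⁻¹, hAAinv, Matrix.mul_assoc R⁻¹ R⁻¹ R,
    Matrix.inv_mul_of_invertible, Matrix.mul_one, Matrix.mul_inv_of_invertible]
end

section
/- (Alignment of the symmetrization matrices: Z_B F_B = F_A and Z_C F_C = F_A.) Let F_A ∈ ℝ^{n_A×k}, F_B ∈ ℝ^{n_B×k}, F_C ∈ ℝ^{n_C×k} with F_B and F_C of full column rank k, and let D ∈ ℝ^{k×k} be invertible. Define Pairs(A,C) := F_A D F_Cᵀ, Pairs(B,C) := F_B D F_Cᵀ, Pairs(A,B) := F_A D F_Bᵀ, Pairs(C,B) := F_C D F_Bᵀ, and let Pairs(B,C)† := F_C(F_CᵀF_C)^{−1}D^{−1}(F_BᵀF_B)^{−1}F_Bᵀ and Pairs(C,B)† := F_B(F_BᵀF_B)^{−1}D^{−1}(F_CᵀF_C)^{−1}F_Cᵀ (their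 Moore–Penrose pseudoinverses). Then Z_B := Pairs(A,C)·Pairs(B,C)† satisfies Z_B F_B = F_A, and Z_C := Pairs(A,B)·Pairs(C,B)† satisfies Z_C F_C = F_A. -/
open Matrix

lemma isUnit_det_of_rank_eq {k : ℕ} (M : Matrix (Fin k) (Fin k) ℝ)
    (h : M.rank = k) : IsUnit M.det := by
  rw [isUnit_iff_ne_zero]
  intro h0
  obtain ⟨v, hv, hmv⟩ := (Matrix.exists_mulVec_eq_zero_iff).2 h0
  have hker : LinearMap.ker M.mulVecLin = ⊥ := by
    have hrn := LinearMap.finrank_range_add_finrank_ker M.mulVecLin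
    have hr : Module.finrank ℝ (LinearMap.range M.mulVecLin) = k := h
    simp only [hr, Module.finrank_pi, Fintype.card_fin] at hrn
    have : Module.finrank ℝ (LinearMap.ker M.mulVecLin) = 0 := by omega
    exact Submodule.finrank_eq_zero.mp this
  have : v ∈ LinearMap.ker M.mulVecLin := hmv
  rw [hker, Submodule.mem_bot] at this
  exact hv this

lemma gram_isUnit {n k : ℕ} (F : Matrix (Fin n) (Fin k) ℝ) (h : F.rank = k) :
    IsUnit (Fᵀ * F).det :=
  isUnit_det_of_rank_eq _ (by rw [Matrix.rank_transpose_mul_self, h])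

lemma align_aux {nA nB nC k : ℕ}
    (FA : Matrix (Fin nA) (Fin k) ℝ)
    (FB : Matrix (Fin nB) (Fin k) ℝ)
    (FC : Matrix (Fin nC) (Fin k) ℝ)
    (hFB : FB.rank = k) (hFC : FC.rank = k)
    (D : Matrix (Fin k) (Fin k) ℝ) (hD : IsUnit D.det) :
    (FA * D * FCᵀ) * (FC * (FCᵀ * FC)⁻¹ * D⁻¹ * (FBᵀ * FB)⁻¹ * FBᵀ) * FB = FA := by
  have e1 : (FCᵀ * FC) * (FCᵀ * FC)⁻¹ = 1 := Matrix.mul_nonsing_inv _ (gram_isUnit FC hFC)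
  have e2 : (FBᵀ * FB)⁻¹ * (FBᵀ * FB) = 1 := Matrix.nonsing_inv_mul _ (gram_isUnit FB hFB)
  have e3 : D * D⁻¹ = 1 := Matrix.mul_nonsing_inv _ hD
  calc (FA * D * FCᵀ) * (FC * (FCᵀ * FC)⁻¹ * D⁻¹ * (FBᵀ * FB)⁻¹ * FBᵀ) * FB
      = FA * ((D * ((FCᵀ * FC) * (FCᵀ * FC)⁻¹)) * D⁻¹) * ((FBᵀ * FB)⁻¹ * (FBᵀ * FB)) := by
        simp only [Matrix.mul_assoc]
    _ = FA := by rw [e1, Matrix.mul_one, e3, Matrix.mul_one, e2, Matrix.mul_one]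

/-- Alignment of the symmetrization matrices in the MMSB moment computation:
`Z_B F_B = F_A` and `Z_C F_C = F_A`, where
`Z_B = Pairs(A,C) Pairs(B,C)†` and `Z_C = Pairs(A,B) Pairs(C,B)†` with
`Pairs(Y₁,Y₂) = F_{Y₁} D F_{Y₂}ᵀ`. -/
theorem symmetrization_alignment (nA nB nC k : ℕ)
    (FA : Matrix (Fin nA) (Fin k) ℝ)
    (FB : Matrix (Fin nB) (Fin k) ℝ)
    (FC : Matrix (Fin nC) (Fin k) ℝ)
    (hFB : FB.rank = k) (hFC : FC.rank = k)
    (D : Matrix (Fin k) (Fin k) ℝ) (hD : IsUnit D.det) :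
    let pairsACpinvBC := (FA * D * FCᵀ) *
      (FC * (FCᵀ * FC)⁻¹ * D⁻¹ * (FBᵀ * FB)⁻¹ * FBᵀ)
    let pairsABpinvCB := (FA * D * FBᵀ) *
      (FB * (FBᵀ * FB)⁻¹ * D⁻¹ * (FCᵀ * FC)⁻¹ * FCᵀ)
    pairsACpinvBC * FB = FA ∧ pairsABpinvCB * FC = FA := by
  exact ⟨align_aux FA FB FC hFB hFC D hD, align_aux FA FC FB hFC hFB D hD⟩
end

section
/- (Symmetrization yields the exact second-order moment: M2 = F_A D F_Aᵀ.) Let F_A ∈ ℝ^{n_A×k}, F_B ∈ ℝ^{n_B×k}, F_C ∈ ℝ^{n_C×k} with F_B and F_C of full column rank k, and let D ∈ ℝ^{k×k} be invertible. With Pairs(Y_1,Y_2) := F_{Y_1} D F_{Y_2}ᵀ, Pairs(B,C)† := F_C(F_CᵀF_C)^{−1}D^{−1}(F_BᵀF_B)^{−1}F_Bᵀ, Pairs(C,B)† := F_B(F_BᵀF_B)^{−1}D^{−1}(F_CᵀF_C)^{−1}F_Cᵀ, Z_B := Pairs(A,C)·Pairs(B,C)†, and Z_C := Pairs(A,B)·Pairs(C,B)†,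 one has Z_C · Pairs(C,B) · Z_Bᵀ = F_A D F_Aᵀ. -/
open Matrix

/-- Symmetrization yields the exact second-order moment:
`Z_C · Pairs(C,B) · Z_Bᵀ = F_A D F_Aᵀ`, where `Z_B = Pairs(A,C) Pairs(B,C)†`,
`Z_C = Pairs(A,B) Pairs(C,B)†`, and `Pairs(Y₁,Y₂) = F_{Y₁} D F_{Y₂}ᵀ`. -/
theorem symmetrized_second_moment (nA nB nC k : ℕ)
    (FA : Matrix (Fin nA) (Fin k) ℝ)
    (FB : Matrix (Fin nB) (Fin k) ℝ)
    (FC : Matrix (Fin nC) (Fin k) ℝ)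
    (hFB : FB.rank = k) (hFC : FC.rank = k)
    (D : Matrix (Fin k) (Fin k) ℝ) (hD : IsUnit D.det) :
    let ZB := (FA * D * FCᵀ) *
      (FC * (FCᵀ * FC)⁻¹ * D⁻¹ * (FBᵀ * FB)⁻¹ * FBᵀ)
    let ZC := (FA * D * FBᵀ) *
      (FB * (FBᵀ * FB)⁻¹ * D⁻¹ * (FCᵀ * FC)⁻¹ * FCᵀ)
    ZC * (FC * D * FBᵀ) * ZBᵀ = FA * D * FAᵀ := by
  intro ZB ZC
  have hB : IsUnit (FBᵀ * FB).det :=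
    isUnit_det_of_rank_eq _ (by rw [Matrix.rank_transpose_mul_self, hFB])
  have hC : IsUnit (FCᵀ * FC).det :=
    isUnit_det_of_rank_eq _ (by rw [Matrix.rank_transpose_mul_self, hFC])
  have hZB : ZB = FA * (FBᵀ * FB)⁻¹ * FBᵀ := by
    show (FA * D * FCᵀ) * (FC * (FCᵀ * FC)⁻¹ * D⁻¹ * (FBᵀ * FB)⁻¹ * FBᵀ) = _
    simp only [Matrix.mul_assoc]
    rw [← Matrix.mul_assoc FCᵀ FC, Matrix.mul_nonsing_inv_cancel_left _ _ hC,
      Matrix.mul_nonsing_inv_cancel_left _ _ hD]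
  have hZC : ZC = FA * (FCᵀ * FC)⁻¹ * FCᵀ := by
    show (FA * D * FBᵀ) * (FB * (FBᵀ * FB)⁻¹ * D⁻¹ * (FCᵀ * FC)⁻¹ * FCᵀ) = _
    simp only [Matrix.mul_assoc]
    rw [← Matrix.mul_assoc FBᵀ FB, Matrix.mul_nonsing_inv_cancel_left _ _ hB,
      Matrix.mul_nonsing_inv_cancel_left _ _ hD]
  have hsym : ((FBᵀ * FB)⁻¹)ᵀ = (FBᵀ * FB)⁻¹ := by
    rw [Matrix.transpose_nonsing_inv, Matrix.transpose_mul, Matrix.transpose_transpose]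
  rw [hZB, hZC, Matrix.transpose_mul, Matrix.transpose_mul, hsym, Matrix.transpose_transpose]
  simp only [Matrix.mul_assoc]
  rw [← Matrix.mul_assoc FCᵀ FC, Matrix.nonsing_inv_mul_cancel_left _ _ hC,
    ← Matrix.mul_assoc FBᵀ FB, Matrix.mul_nonsing_inv_cancel_left _ _ hB]
end
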